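/- Consider f(x) = x² + ix − ½i − ¼ over ℍ, which has fixed point α = −½i. For every λ of the form λ = −½i + r + γ with r ∈ ℂ ⊆ ℍ and γ a nonzero element of ℂj, the component of f(λ) − α lying in ℂj equals (2·Re(r) + i)·γ, and its absolute value is at least |γ|. In particular, the iterates f^{*n}(λ) do not converge to α. -/

import Mathlib

open Quaternion

/-- The quaternion unit `i`. -/
noncomputable def qi : ℍ[ℝ] := ⟨0, 1, 0, 0⟩

/-- The fixed point `α = -i/2`. -/
noncomputable def qα : ℍ[ℝ] := ⟨0, -1/2, 0, 0⟩

/-- The constant term `-i/2 - 1/4`. -/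
noncomputable def qC : ℍ[ℝ] := ⟨-1/4, -1/2, 0, 0⟩

/-- The polynomial map `f(x) = x² + ix - i/2 - 1/4`. -/
noncomputable def qf (x : ℍ[ℝ]) : ℍ[ℝ] := x ^ 2 + qi * x + qC

/-- The multiplier `2·Re(r) + i` as a quaternion. -/
noncomputable def qmult (r : ℍ[ℝ]) : ℍ[ℝ] := ⟨2 * r.re, 1, 0, 0⟩

/-- The projection of a quaternion onto the `ℂj` component. -/
noncomputable def projCj (z : ℍ[ℝ]) : ℍ[ℝ] := ⟨0, 0, z.imJ, z.imK⟩

lemma key (x : ℍ[ℝ]) : projCj (qf x - qα) = qmult x * projCj x := by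
  ext <;> simp [qf, pow_two, Quaternion.re_mul, Quaternion.imI_mul, Quaternion.imJ_mul, Quaternion.imK_mul] <;>
    simp [projCj, Quaternion.re_mul, Quaternion.imI_mul, Quaternion.imJ_mul, Quaternion.imK_mul] <;>
    simp [qi, qα, qC, qmult] <;> ring

lemma norm_sq_eq (q : ℍ[ℝ]) :
    ‖q‖ ^ 2 = q.re ^ 2 + q.imI ^ 2 + q.imJ ^ 2 + q.imK ^ 2 := by
  rw [pow_two, ← Quaternion.normSq_eq_norm_mul_self, Quaternion.normSq_def']

lemma one_le_qmult (x : ℍ[ℝ]) : 1 ≤ ‖qmult x‖ := by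
  have h : (1:ℝ) ≤ ‖qmult x‖ ^ 2 := by
    rw [norm_sq_eq]; simp [qmult]; positivity
  nlinarith [norm_nonneg (qmult x)]

lemma norm_proj_le (x : ℍ[ℝ]) : ‖projCj x‖ ≤ ‖x‖ := by
  have h : ‖projCj x‖ ^ 2 ≤ ‖x‖ ^ 2 := by
    rw [norm_sq_eq, norm_sq_eq]; simp [projCj]; positivity
  nlinarith [norm_nonneg x, norm_nonneg (projCj x)]

lemma step (x : ℍ[ℝ]) : ‖projCj x‖ ≤ ‖projCj (qf x - qα)‖ := by
  rw [key, norm_mul]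
  nlinarith [one_le_qmult x, norm_nonneg (projCj x)]

lemma proj_sub (x : ℍ[ℝ]) : projCj (x - qα) = projCj x := by
  ext <;> simp [projCj] <;> simp [qα]

theorem example_non_attracting (r γ lam : ℍ[ℝ])
    (hr : r.imJ = 0 ∧ r.imK = 0)
    (hγ : γ.re = 0 ∧ γ.imI = 0) (hγ0 : γ ≠ 0)
    (hlam : lam = qα + r + γ) :
    projCj (qf lam - qα) = qmult r * γ ∧
    ‖γ‖ ≤ ‖projCj (qf lam - qα)‖ ∧
    ¬ Filter.Tendsto (fun n : ℕ => qf^[n] lam) Filter.atTop (nhds qα) := by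
  have hproj : projCj lam = γ := by
    ext <;> simp [projCj, hlam, hr.1, hr.2, hγ.1, hγ.2] <;> simp [qα, hr.1, hr.2]
  have hre : lam.re = r.re := by simp [hlam, hγ.1]; simp [qα]
  have hmult : qmult lam = qmult r := by unfold qmult; rw [hre]
  have h1 : projCj (qf lam - qα) = qmult r * γ := by
    rw [key, hproj, hmult]
  have hγpos : 0 < ‖γ‖ := norm_pos_iff.mpr hγ0
  -- iterates
  have hiter : ∀ n, ‖γ‖ ≤ ‖projCj (qf^[n] lam)‖ := by
    intro n
    induction n with
    | zero => simp [hproj]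
    | succ n ih =>
      rw [Function.iterate_succ_apply']
      calc ‖γ‖ ≤ ‖projCj (qf^[n] lam)‖ := ih
        _ ≤ ‖projCj (qf (qf^[n] lam) - qα)‖ := step _
        _ = ‖projCj (qf (qf^[n] lam))‖ := by rw [proj_sub]
  refine ⟨h1, ?_, ?_⟩
  · have := hiter 1
    simpa [proj_sub] using this
  · intro h
    have hd : Filter.Tendsto (fun n : ℕ => ‖qf^[n] lam - qα‖) Filter.atTop (nhds 0) := by
      have := h.sub_const qα
      simpa using this.norm
    have hlow : ∀ n, ‖γ‖ ≤ ‖qf^[n] lam - qα‖ := fun n =>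
      (hiter n).trans ((proj_sub _).symm ▸ norm_proj_le (qf^[n] lam - qα))
    have : ‖γ‖ ≤ 0 := le_of_tendsto_of_tendsto' tendsto_const_nhds hd hlow
    linarith
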